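/- Let k ∈ ℂ and y ∈ ℝ³. The function u : ℝ³ \ {y} → ℂ defined by u(x) = exp(i k ‖x−y‖)/(4π ‖x−y‖) is twice continuously differentiable on ℝ³ \ {y} and satisfies the Helmholtz equation Δu(x) + k² u(x) = 0 for every x ≠ y. -/

import Mathlib

noncomputable section

open MeasureTheory

/-- The Euclidean norm on `ℝ³` (realized as `Fin 3 → ℝ`). -/
def enorm3 (x : Fin 3 → ℝ) : ℝ := Real.sqrt (x 0 ^ 2 + x 1 ^ 2 + x 2 ^ 2)

/-- The Helmholtz Green's function `G_k(x,y) = exp(i k ‖x−y‖)/(4π ‖x−y‖)`. -/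
def G (k : ℂ) (x y : Fin 3 → ℝ) : ℂ :=
  Complex.exp (Complex.I * k * (enorm3 (x - y) : ℂ)) /
    (4 * (Real.pi : ℂ) * (enorm3 (x - y) : ℂ))

/-- Partial derivative in the `i`-th coordinate direction. -/
def pd (i : Fin 3) (f : (Fin 3 → ℝ) → ℂ) (x : Fin 3 → ℝ) : ℂ :=
  fderiv ℝ f x (Pi.single i 1)

/-- The Laplacian `Δf = ∂₁²f + ∂₂²f + ∂₃²f`. -/
def lap (f : (Fin 3 → ℝ) → ℂ) (x : Fin 3 → ℝ) : ℂ :=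
  pd 0 (pd 0 f) x + pd 1 (pd 1 f) x + pd 2 (pd 2 f) x

/-! ### Auxiliary definitions and lemmas -/

def rr (y x : Fin 3 → ℝ) : ℝ := Real.sqrt ((x 0 - y 0)^2 + (x 1 - y 1)^2 + (x 2 - y 2)^2)

lemma rr_pos {y x : Fin 3 → ℝ} (h : x ≠ y) : 0 < rr y x := by
  rw [rr, Real.sqrt_pos]
  obtain ⟨i, hi⟩ := Function.ne_iff.mp h
  have : x i - y i ≠ 0 := sub_ne_zero.mpr hi
  fin_cases i <;> positivity

lemma N_ne_zero {y x : Fin 3 → ℝ} (h : x ≠ y) :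
    (x 0 - y 0)^2 + (x 1 - y 1)^2 + (x 2 - y 2)^2 ≠ 0 := by
  have := rr_pos h
  rw [rr, Real.sqrt_pos] at this
  linarith

def LN (y x : Fin 3 → ℝ) : (Fin 3 → ℝ) →L[ℝ] ℝ :=
  (2*(x 0 - y 0)) • ContinuousLinearMap.proj 0 + (2*(x 1 - y 1)) • ContinuousLinearMap.proj 1 +
    (2*(x 2 - y 2)) • ContinuousLinearMap.proj 2

lemma hasFDerivAt_N (y x : Fin 3 → ℝ) :
    HasFDerivAt (fun z : Fin 3 → ℝ => (z 0 - y 0)^2 + (z 1 - y 1)^2 + (z 2 - y 2)^2)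
      (LN y x) x := by
  have h : ∀ i : Fin 3, HasFDerivAt (fun z : Fin 3 → ℝ => (z i - y i)^2)
      ((2*(x i - y i)) • (ContinuousLinearMap.proj i : (Fin 3 → ℝ) →L[ℝ] ℝ)) x := by
    intro i
    have hf := (ContinuousLinearMap.hasFDerivAt
      (ContinuousLinearMap.proj i : (Fin 3 → ℝ) →L[ℝ] ℝ) (x := x)).sub_const (y i)
    have := hf.mul hf
    convert this using 1
    any_goals rfl
    · ext z; simp [ContinuousLinearMap.proj_apply]; ring
    · ext v; simp [ContinuousLinearMap.proj_apply]; ring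
  exact ((h 0).add (h 1)).add (h 2)

lemma hasFDerivAt_rr {y x : Fin 3 → ℝ} (h : x ≠ y) :
    HasFDerivAt (rr y) ((1/(2 * rr y x)) • LN y x) x :=
  (Real.hasDerivAt_sqrt (N_ne_zero h)).comp_hasFDerivAt x (hasFDerivAt_N y x)

lemma LN_single (y x : Fin 3 → ℝ) (j : Fin 3) :
    LN y x (Pi.single j 1) = 2 * (x j - y j) := by
  fin_cases j <;> simp [LN, Pi.single_apply]

lemma hasDerivAt_ofReal (t : ℝ) : HasDerivAt (fun s : ℝ => (s : ℂ)) 1 t := by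
  simpa using (hasDerivAt_id t).ofReal_comp

def phi (k : ℂ) (t : ℝ) : ℂ := Complex.exp (Complex.I * k * t) / (4 * (Real.pi : ℂ) * t)
def phid (k : ℂ) (t : ℝ) : ℂ :=
  (Complex.I * k * t - 1) * Complex.exp (Complex.I * k * t) / (4 * (Real.pi : ℂ) * t ^ 2)
def psi (k : ℂ) (t : ℝ) : ℂ :=
  (Complex.I * k * t - 1) * Complex.exp (Complex.I * k * t) / (4 * (Real.pi : ℂ) * t ^ 3)
def psid (k : ℂ) (t : ℝ) : ℂ :=
  ((Complex.I * k * t) ^ 2 - 3 * (Complex.I * k * t) + 3) * Complex.exp (Complex.I * k * t) /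
    (4 * (Real.pi : ℂ) * t ^ 4)

lemma hasDerivAt_lin (k : ℂ) (t : ℝ) :
    HasDerivAt (fun s : ℝ => Complex.I * k * s) (Complex.I * k) t := by
  simpa using (hasDerivAt_ofReal t).const_mul (Complex.I * k)

lemma hasDerivAt_exp' (k : ℂ) (t : ℝ) :
    HasDerivAt (fun s : ℝ => Complex.exp (Complex.I * k * s))
      (Complex.I * k * Complex.exp (Complex.I * k * t)) t := by
  simpa [mul_comm] using (hasDerivAt_lin k t).cexp

lemma hasDerivAt_phi (k : ℂ) {t : ℝ} (ht : t ≠ 0) : HasDerivAt (phi k) (phid k t) t := by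
  have hden : HasDerivAt (fun s : ℝ => 4 * (Real.pi : ℂ) * s) (4 * (Real.pi : ℂ)) t := by
    simpa using (hasDerivAt_ofReal t).const_mul (4 * (Real.pi : ℂ))
  have hd0 : (4 * (Real.pi : ℂ) * t) ≠ 0 := by
    simp [Real.pi_ne_zero, ht]
  have := (hasDerivAt_exp' k t).div hden hd0
  convert this using 1
  any_goals rfl
  rw [phid]
  have hπ : (Real.pi : ℂ) ≠ 0 := by exact_mod_cast Real.pi_ne_zero
  have ht' : (t : ℂ) ≠ 0 := by exact_mod_cast ht
  field_simp

lemma hasDerivAt_psi (k : ℂ) {t : ℝ} (ht : t ≠ 0) : HasDerivAt (psi k) (psid k t) t := by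
  have hnum : HasDerivAt (fun s : ℝ => (Complex.I * k * s - 1) * Complex.exp (Complex.I * k * s))
      (Complex.I * k * Complex.exp (Complex.I * k * t) +
        (Complex.I * k * t - 1) * (Complex.I * k * Complex.exp (Complex.I * k * t))) t := by
    have h1 := (hasDerivAt_lin k t).sub_const 1
    have := h1.mul (hasDerivAt_exp' k t)
    convert this using 1
    all_goals rfl
  have hden : HasDerivAt (fun s : ℝ => 4 * (Real.pi : ℂ) * (s : ℂ) ^ 3)
      (4 * (Real.pi : ℂ) * (3 * (t : ℂ) ^ 2)) t := by
    have h1 := hasDerivAt_ofReal t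
    have hp := (h1.mul h1).mul h1
    have := hp.const_mul (4 * (Real.pi : ℂ))
    refine HasDerivAt.congr_deriv (this.congr_of_eventuallyEq ?_) ?_
    · filter_upwards with s; simp only [Pi.mul_apply]; ring
    · simp only [Pi.mul_apply]; ring
  have hd0 : (4 * (Real.pi : ℂ) * (t : ℂ) ^ 3) ≠ 0 := by
    have hπ : (Real.pi : ℂ) ≠ 0 := by exact_mod_cast Real.pi_ne_zero
    have ht' : (t : ℂ) ≠ 0 := by exact_mod_cast ht
    simp [hπ, ht']
  have := hnum.div hden hd0
  convert this using 1
  any_goals rfl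
  rw [psid]
  have hπ : (Real.pi : ℂ) ≠ 0 := by exact_mod_cast Real.pi_ne_zero
  have ht' : (t : ℂ) ≠ 0 := by exact_mod_cast ht
  field_simp
  ring

lemma enorm3_sub (x y : Fin 3 → ℝ) : enorm3 (x - y) = rr y x := by
  simp [enorm3, rr]

lemma G_eq (k : ℂ) (x y : Fin 3 → ℝ) : G k x y = phi k (rr y x) := by
  rw [G, phi, enorm3_sub]

lemma hasFDerivAt_G {k : ℂ} {y x : Fin 3 → ℝ} (h : x ≠ y) :
    HasFDerivAt (fun z => G k z y)
      ((ContinuousLinearMap.smulRight (1 : ℝ →L[ℝ] ℝ) (phid k (rr y x))).comp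
        ((1/(2 * rr y x)) • LN y x)) x := by
  have hphi : HasFDerivAt (phi k)
      (ContinuousLinearMap.smulRight (1 : ℝ →L[ℝ] ℝ) (phid k (rr y x))) (rr y x) :=
    (hasDerivAt_phi k (rr_pos h).ne').hasFDerivAt
  have := hphi.comp x (hasFDerivAt_rr h)
  exact this.congr_of_eventuallyEq (by filter_upwards with z using (G_eq k z y).symm ▸ rfl)

def co (y : Fin 3 → ℝ) (j : Fin 3) (x : Fin 3 → ℝ) : ℂ := ((x j - y j : ℝ) : ℂ)
def Fi (k : ℂ) (y : Fin 3 → ℝ) (j : Fin 3) (x : Fin 3 → ℝ) : ℂ := psi k (rr y x) * co y j x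

lemma pd_G {k : ℂ} {y x : Fin 3 → ℝ} (h : x ≠ y) (j : Fin 3) :
    pd j (fun z => G k z y) x = Fi k y j x := by
  have hr := rr_pos h
  have hrc : ((rr y x : ℝ) : ℂ) ≠ 0 := by exact_mod_cast hr.ne'
  have hπ : (Real.pi : ℂ) ≠ 0 := by exact_mod_cast Real.pi_ne_zero
  rw [pd, (hasFDerivAt_G h).fderiv]
  simp only [ContinuousLinearMap.comp_apply, ContinuousLinearMap.smul_apply,
    ContinuousLinearMap.smulRight_apply, ContinuousLinearMap.one_apply, LN_single,
    smul_eq_mul, Fi, co, psi, phid, Complex.real_smul]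
  push_cast
  field_simp

lemma hasFDerivAt_psirr {k : ℂ} {y x : Fin 3 → ℝ} (h : x ≠ y) :
    HasFDerivAt (fun z => psi k (rr y z))
      ((ContinuousLinearMap.smulRight (1 : ℝ →L[ℝ] ℝ) (psid k (rr y x))).comp
        ((1/(2 * rr y x)) • LN y x)) x := by
  have hpsi : HasFDerivAt (psi k)
      (ContinuousLinearMap.smulRight (1 : ℝ →L[ℝ] ℝ) (psid k (rr y x))) (rr y x) :=
    (hasDerivAt_psi k (rr_pos h).ne').hasFDerivAt
  exact hpsi.comp x (hasFDerivAt_rr h)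

lemma hasFDerivAt_co (y : Fin 3 → ℝ) (j : Fin 3) (x : Fin 3 → ℝ) :
    HasFDerivAt (co y j)
      (Complex.ofRealCLM.comp (ContinuousLinearMap.proj j : (Fin 3 → ℝ) →L[ℝ] ℝ)) x := by
  have h1 := ((ContinuousLinearMap.proj j : (Fin 3 → ℝ) →L[ℝ] ℝ).hasFDerivAt
    (x := x)).sub_const (y j)
  exact Complex.ofRealCLM.hasFDerivAt.comp x h1

lemma hasFDerivAt_Fi {k : ℂ} {y x : Fin 3 → ℝ} (h : x ≠ y) (j : Fin 3) :
    HasFDerivAt (Fi k y j)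
      (psi k (rr y x) • (Complex.ofRealCLM.comp
          (ContinuousLinearMap.proj j : (Fin 3 → ℝ) →L[ℝ] ℝ)) +
        co y j x • ((ContinuousLinearMap.smulRight (1 : ℝ →L[ℝ] ℝ) (psid k (rr y x))).comp
          ((1/(2 * rr y x)) • LN y x))) x :=
  (hasFDerivAt_psirr h).mul (hasFDerivAt_co y j x)

lemma pd_pd_G {k : ℂ} {y x : Fin 3 → ℝ} (h : x ≠ y) (j : Fin 3) :
    pd j (pd j (fun z => G k z y)) x =
      psi k (rr y x) +
        ((x j - y j : ℝ) : ℂ) ^ 2 * psid k (rr y x) / ((rr y x : ℝ) : ℂ) := by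
  have hr := rr_pos h
  have hrc : ((rr y x : ℝ) : ℂ) ≠ 0 := by exact_mod_cast hr.ne'
  have heq : pd j (fun z => G k z y) =ᶠ[nhds x] Fi k y j := by
    have hopen : {y}ᶜ ∈ nhds x := (isOpen_compl_singleton).mem_nhds h
    filter_upwards [hopen] with z hz
    exact pd_G hz j
  rw [pd, heq.fderiv_eq, (hasFDerivAt_Fi h j).fderiv]
  simp only [ContinuousLinearMap.add_apply, ContinuousLinearMap.smul_apply,
    ContinuousLinearMap.comp_apply, ContinuousLinearMap.smulRight_apply,
    ContinuousLinearMap.one_apply, ContinuousLinearMap.proj_apply, LN_single,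
    Complex.ofRealCLM_apply, smul_eq_mul, co, Complex.real_smul]
  have hj : (Pi.single j 1 : Fin 3 → ℝ) j = 1 := by simp
  rw [hj]
  push_cast
  field_simp

lemma alg (k : ℂ) {t : ℝ} (ht : t ≠ 0) :
    3 * psi k t + ((t : ℂ)) ^ 2 * psid k t / (t : ℂ) + k ^ 2 * phi k t = 0 := by
  have hπ : (Real.pi : ℂ) ≠ 0 := by exact_mod_cast Real.pi_ne_zero
  have ht' : (t : ℂ) ≠ 0 := by exact_mod_cast ht
  rw [psi, psid, phi]
  rw [show (Complex.I * k * t) ^ 2 = -(k ^ 2 * (t : ℂ) ^ 2) by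
    rw [mul_pow, mul_pow, Complex.I_sq]; ring]
  field_simp
  ring_nf

lemma sum_sq (y x : Fin 3 → ℝ) :
    (x 0 - y 0)^2 + (x 1 - y 1)^2 + (x 2 - y 2)^2 = (rr y x)^2 := by
  rw [rr, Real.sq_sqrt (by positivity)]

lemma contDiffAt_rr {y x : Fin 3 → ℝ} (h : x ≠ y) : ContDiffAt ℝ 2 (rr y) x := by
  have hc : ∀ i : Fin 3, ContDiff ℝ 2 (fun z : Fin 3 → ℝ => (z i - y i)^2) := fun i =>
    (((ContinuousLinearMap.proj i : (Fin 3 → ℝ) →L[ℝ] ℝ).contDiff).sub contDiff_const).pow 2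
  have hN : ContDiff ℝ 2
      (fun z : Fin 3 → ℝ => (z 0 - y 0)^2 + (z 1 - y 1)^2 + (z 2 - y 2)^2) :=
    ((hc 0).add (hc 1)).add (hc 2)
  exact (Real.contDiffAt_sqrt (N_ne_zero h)).comp x hN.contDiffAt

lemma contDiffAt_G {k : ℂ} {y x : Fin 3 → ℝ} (h : x ≠ y) :
    ContDiffAt ℝ 2 (fun z => G k z y) x := by
  have hr := rr_pos h
  have h1 : ContDiffAt ℝ 2 (fun z => ((rr y z : ℝ) : ℂ)) x :=
    Complex.ofRealCLM.contDiff.contDiffAt.comp x (contDiffAt_rr h)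
  have hexp : ContDiff ℝ 2 Complex.exp := Complex.contDiff_exp
  have hnum : ContDiffAt ℝ 2 (fun z => Complex.exp (Complex.I * k * (rr y z : ℝ))) x :=
    hexp.contDiffAt.comp x (contDiffAt_const.mul h1)
  have hden : ContDiffAt ℝ 2 (fun z => 4 * (Real.pi : ℂ) * (rr y z : ℝ)) x :=
    contDiffAt_const.mul h1
  have hden0 : 4 * (Real.pi : ℂ) * (rr y x : ℝ) ≠ 0 := by
    have hπ : (Real.pi : ℂ) ≠ 0 := by exact_mod_cast Real.pi_ne_zero
    have hrc : ((rr y x : ℝ) : ℂ) ≠ 0 := by exact_mod_cast hr.ne'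
    simp [hπ, hrc]
  have hinv : ContDiffAt ℝ 2 (Inv.inv : ℂ → ℂ) (4 * (Real.pi : ℂ) * (rr y x : ℝ)) :=
    contDiffAt_inv ℝ hden0
  have := hnum.mul (hinv.comp x hden)
  have hfun : (fun z => G k z y) = fun z =>
      Complex.exp (Complex.I * k * (rr y z : ℝ)) * (4 * (Real.pi : ℂ) * (rr y z : ℝ))⁻¹ :=
    funext fun z => by rw [G_eq, phi, div_eq_mul_inv]
  rw [hfun]
  exact this

/-- The Helmholtz Green's function `u(x) = exp(i k ‖x−y‖)/(4π ‖x−y‖)` is twice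
continuously differentiable away from `y` and satisfies `Δu + k² u = 0` for `x ≠ y`. -/
theorem statement0 (k : ℂ) (y : Fin 3 → ℝ) :
    ContDiffOn ℝ 2 (fun x => G k x y) {y}ᶜ ∧
      ∀ x : Fin 3 → ℝ, x ≠ y →
        lap (fun z => G k z y) x + k ^ 2 * G k x y = 0 := by
  constructor
  · exact fun x hx => (contDiffAt_G hx).contDiffWithinAt
  · intro x h
    have hr := rr_pos h
    have hrc : ((rr y x : ℝ) : ℂ) ≠ 0 := by exact_mod_cast hr.ne'
    have hsum : ((x 0 - y 0 : ℝ) : ℂ)^2 + ((x 1 - y 1 : ℝ) : ℂ)^2 + ((x 2 - y 2 : ℝ) : ℂ)^2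
        = ((rr y x : ℝ) : ℂ)^2 := by
      exact_mod_cast congrArg (fun t : ℝ => (t : ℂ)) (sum_sq y x)
    have halg := alg k hr.ne'
    rw [lap, pd_pd_G h 0, pd_pd_G h 1, pd_pd_G h 2, G_eq]
    linear_combination halg + psid k (rr y x) / ((rr y x : ℝ) : ℂ) * hsum
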